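/- Let P and P' be adjacent corner perfect matchings of a consistent dimer model with symmetric difference P ⊖ P' = {z_1, ..., z_r} (zigzag paths of equal slope), where P ∩ z_i = Zig(z_i) and P' ∩ z_i = Zag(z_i). Then for every subset I ⊆ {1,...,r}, the edge set P_I := (⋃_{i ∉ I} Zig(z_i)) ∪ (⋃_{i ∈ I} Zag(z_i)) ∪ (P ∩ P') is a perfect matching of the dimer model. -/
import Mathlib


open Finset

/-- A perfect matching of a (dimer) graph, encoded by its incidence relation
`inc e v` ("edge `e` has endpoint `v`"): a set of edges such that every node is an
endpoint of exactly one edge of the set. -/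
def IsPerfectMatching {N E : Type*} (inc : E → N → Prop) (P : Finset E) : Prop :=
  ∀ v : N, ∃! e : E, e ∈ P ∧ inc e v

/-- Let `P`, `P'` be adjacent corner perfect matchings of a consistent
dimer model with symmetric difference `P ⊖ P' = {z_1, …, z_r}`, a family of pairwise
non-intersecting zigzag paths of equal slope, with `P ∩ z_i = Zig(z_i)` and
`P' ∩ z_i = Zag(z_i)`.  (Each `z_i` is a closed alternating cycle: every node met by
`z_i` is incident to exactly one zig and one zag of `z_i`.)  Then for every subset
`I ⊆ {1,…,r}` the edge set
`P_I = (⋃_{i ∉ I} Zig(z_i)) ∪ (⋃_{i ∈ I} Zag(z_i)) ∪ (P ∩ P')`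
is a perfect matching. -/
theorem pmOf_subset_isPerfectMatching
    {N E : Type*} [DecidableEq E] (inc : E → N → Prop)
    (r : ℕ) (Zig Zag : Fin r → Finset E) (P P' : Finset E)
    (hP : IsPerfectMatching inc P) (hP' : IsPerfectMatching inc P')
    (hPz : ∀ i, P ∩ (Zig i ∪ Zag i) = Zig i)
    (hP'z : ∀ i, P' ∩ (Zig i ∪ Zag i) = Zag i)
    (hsd : (P ∪ P') \ (P ∩ P') = Finset.univ.biUnion (fun i => Zig i ∪ Zag i))
    (hdisj : ∀ i j, i ≠ j → Disjoint (Zig i ∪ Zag i) (Zig j ∪ Zag j))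
    (hcycle : ∀ i (v : N), (∃ e ∈ Zig i, inc e v) ↔ (∃ e ∈ Zag i, inc e v)) :
    ∀ I : Finset (Fin r),
      IsPerfectMatching inc
        (((Finset.univ \ I).biUnion Zig) ∪ (I.biUnion Zag) ∪ (P ∩ P')) := by
  intro I
  set Q := ((Finset.univ \ I).biUnion Zig) ∪ (I.biUnion Zag) ∪ (P ∩ P') with hQdef
  have hnot : ∀ i e, e ∈ Zig i ∪ Zag i → e ∉ P ∩ P' := by
    intro i e he hmem
    have h1 : e ∈ (P ∪ P') \ (P ∩ P') := by
      rw [hsd]; exact mem_biUnion.mpr ⟨i, mem_univ i, he⟩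
    exact (mem_sdiff.mp h1).2 hmem
  have hZigP : ∀ i e, e ∈ Zig i → e ∈ P ∧ e ∉ P' := by
    intro i e he
    have he' : e ∈ P ∩ (Zig i ∪ Zag i) := by rw [hPz i]; exact he
    have heP := (mem_inter.mp he').1
    refine ⟨heP, fun hP'' => hnot i e (mem_inter.mp he').2 (mem_inter.mpr ⟨heP, hP''⟩)⟩
  have hZagP : ∀ i e, e ∈ Zag i → e ∈ P' ∧ e ∉ P := by
    intro i e he
    have he' : e ∈ P' ∩ (Zig i ∪ Zag i) := by rw [hP'z i]; exact he
    have heP := (mem_inter.mp he').1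
    refine ⟨heP, fun hP'' => hnot i e (mem_inter.mp he').2 (mem_inter.mpr ⟨hP'', heP⟩)⟩
  have hmemQ : ∀ e, e ∈ Q ↔
      (∃ i, i ∉ I ∧ e ∈ Zig i) ∨ (∃ i, i ∈ I ∧ e ∈ Zag i) ∨ e ∈ P ∩ P' := by
    intro e
    simp only [hQdef, mem_union, mem_biUnion, mem_sdiff, mem_univ, true_and]
    constructor
    · rintro ((⟨i, hi, h⟩ | ⟨i, hi, h⟩) | h)
      exacts [Or.inl ⟨i, hi, h⟩, Or.inr (Or.inl ⟨i, hi, h⟩), Or.inr (Or.inr h)]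
    · rintro (⟨i, hi, h⟩ | ⟨i, hi, h⟩ | h)
      exacts [Or.inl (Or.inl ⟨i, hi, h⟩), Or.inl (Or.inr ⟨i, hi, h⟩), Or.inr h]
  intro v
  obtain ⟨e₀, ⟨he₀P, he₀v⟩, huP⟩ := hP v
  obtain ⟨f₀, ⟨hf₀P', hf₀v⟩, huP'⟩ := hP' v
  -- uniqueness of edges of Q through v
  have uniq : ∀ a b, a ∈ Q → b ∈ Q → inc a v → inc b v → a = b := by
    have mixed : ∀ a b i j, i ∉ I → a ∈ Zig i → j ∈ I → b ∈ Zag j →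
        inc a v → inc b v → a = b := by
      intro a b i j hiI hai hjI hbj hav hbv
      obtain ⟨g, hgZig, hgv⟩ := (hcycle j v).mpr ⟨b, hbj, hbv⟩
      have hij : i ≠ j := fun h => hiI (h ▸ hjI)
      have hgP := (hZigP j g hgZig).1
      have haP := (hZigP i a hai).1
      have hag : a = g := (huP a ⟨haP, hav⟩).trans (huP g ⟨hgP, hgv⟩).symm
      exact absurd (hag ▸ hgZig)
        (fun h => (Finset.disjoint_left.mp (hdisj i j hij))
          (mem_union_left _ hai) (mem_union_left _ h))
    intro a b haQ hbQ hav hbv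
    have haP : a ∈ P ∨ ∃ j, j ∈ I ∧ a ∈ Zag j := by
      rcases (hmemQ a).mp haQ with ⟨i, _, hai⟩ | h | h
      · exact Or.inl (hZigP i a hai).1
      · exact Or.inr h
      · exact Or.inl (mem_inter.mp h).1
    have hbP : b ∈ P ∨ ∃ j, j ∈ I ∧ b ∈ Zag j := by
      rcases (hmemQ b).mp hbQ with ⟨i, _, hbi⟩ | h | h
      · exact Or.inl (hZigP i b hbi).1
      · exact Or.inr h
      · exact Or.inl (mem_inter.mp h).1
    rcases haP with haP | ⟨j, hjI, haj⟩
    · rcases hbP with hbP | ⟨j, hjI, hbj⟩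
      · exact (huP a ⟨haP, hav⟩).trans (huP b ⟨hbP, hbv⟩).symm
      · -- b is a zag; a is in P.  Either a ∈ P' too, or a is a zig.
        rcases (hmemQ a).mp haQ with ⟨i, hiI, hai⟩ | ⟨i, hiI, hai⟩ | h
        · exact mixed a b i j hiI hai hjI hbj hav hbv
        · exact absurd haP (hZagP i a hai).2
        · have haP' := (mem_inter.mp h).2
          have hbP' := (hZagP j b hbj).1
          exact (huP' a ⟨haP', hav⟩).trans (huP' b ⟨hbP', hbv⟩).symm
    · rcases hbP with hbP | ⟨k, hkI, hbk⟩
      · rcases (hmemQ b).mp hbQ with ⟨i, hiI, hbi⟩ | ⟨i, hiI, hbi⟩ | h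
        · exact (mixed b a i j hiI hbi hjI haj hbv hav).symm
        · exact absurd hbP (hZagP i b hbi).2
        · have hbP' := (mem_inter.mp h).2
          have haP' := (hZagP j a haj).1
          exact (huP' a ⟨haP', hav⟩).trans (huP' b ⟨hbP', hbv⟩).symm
      · have haP' := (hZagP j a haj).1
        have hbP' := (hZagP k b hbk).1
        exact (huP' a ⟨haP', hav⟩).trans (huP' b ⟨hbP', hbv⟩).symm
  -- existence
  have exist : ∃ g, g ∈ Q ∧ inc g v := by
    by_cases hc : e₀ ∈ P'
    · exact ⟨e₀, (hmemQ e₀).mpr (Or.inr (Or.inr (mem_inter.mpr ⟨he₀P, hc⟩))), he₀v⟩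
    · have hsdmem : e₀ ∈ (P ∪ P') \ (P ∩ P') :=
        mem_sdiff.mpr ⟨mem_union_left _ he₀P, fun h => hc (mem_inter.mp h).2⟩
      rw [hsd] at hsdmem
      obtain ⟨i, _, hi⟩ := mem_biUnion.mp hsdmem
      have hZ : e₀ ∈ Zig i := by
        rcases mem_union.mp hi with h | h
        · exact h
        · exact absurd he₀P (hZagP i e₀ h).2
      by_cases hiI : i ∈ I
      · obtain ⟨g, hgZag, hgv⟩ := (hcycle i v).mp ⟨e₀, hZ, he₀v⟩
        exact ⟨g, (hmemQ g).mpr (Or.inr (Or.inl ⟨i, hiI, hgZag⟩)), hgv⟩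
      · exact ⟨e₀, (hmemQ e₀).mpr (Or.inl ⟨i, hiI, hZ⟩), he₀v⟩
  obtain ⟨g, hgQ, hgv⟩ := exist
  exact ⟨g, ⟨hgQ, hgv⟩, fun f ⟨hfQ, hfv⟩ => uniq f g hfQ hgQ hfv hgv⟩
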